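/- Let X be a random variable with a ≤ X ≤ A almost surely (a < A), mean μ, and let p ≥ 1. Then E[|X-μ|^p] ≤ (A-a)^p · κ_p((μ-a)/(A-a)), where κ_p(x) = x(1-x)^p + (1-x)x^p. -/

import Mathlib

open MeasureTheory

noncomputable def kappa (p x : ℝ) : ℝ := x * (1 - x) ^ p + (1 - x) * x ^ p

/-- Convexity of `t ↦ |t - m| ^ p` on `[a, A]` for `p ≥ 1`. -/
lemma convexOn_abs_rpow (m a A p : ℝ) (hp : 1 ≤ p) :
    ConvexOn ℝ (Set.Icc a A) (fun t => |t - m| ^ p) := by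
  refine ⟨convex_Icc a A, fun x _ y _ s t hs ht hst => ?_⟩
  have hp0 : 0 ≤ p := le_trans zero_le_one hp
  have h1 : |s • x + t • y - m| ≤ s * |x - m| + t * |y - m| := by
    have : s • x + t • y - m = s * (x - m) + t * (y - m) := by
      simp only [smul_eq_mul]; linear_combination m * hst
    rw [this]
    calc |s * (x - m) + t * (y - m)| ≤ |s * (x - m)| + |t * (y - m)| := abs_add_le _ _
      _ = s * |x - m| + t * |y - m| := by
          rw [abs_mul, abs_mul, abs_of_nonneg hs, abs_of_nonneg ht]
  calc |s • x + t • y - m| ^ p ≤ (s * |x - m| + t * |y - m|) ^ p :=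
        Real.rpow_le_rpow (abs_nonneg _) h1 hp0
    _ = (s • |x - m| + t • |y - m|) ^ p := by simp [smul_eq_mul]
    _ ≤ s • |x - m| ^ p + t • |y - m| ^ p :=
        (convexOn_rpow hp).2 (Set.mem_Ici.2 (abs_nonneg _)) (Set.mem_Ici.2 (abs_nonneg _))
          hs ht hst
    _ = s * |x - m| ^ p + t * |y - m| ^ p := by simp [smul_eq_mul]

/-- Central-moment bound: `E[|X-μ|^p] ≤ (A-a)^p κ_p((μ-a)/(A-a))`. -/
theorem central_moment_kappa_bound {Ω : Type*} [MeasurableSpace Ω]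
    (μ : Measure Ω) [IsProbabilityMeasure μ]
    (a A : ℝ) (haA : a < A) (p : ℝ) (hp : 1 ≤ p)
    (X : Ω → ℝ) (hX : ∀ᵐ ω ∂μ, X ω ∈ Set.Icc a A)
    (hXint : Integrable X μ)
    (hmom : Integrable (fun ω => |X ω - ∫ ω', X ω' ∂μ| ^ p) μ) :
    (∫ ω, |X ω - ∫ ω', X ω' ∂μ| ^ p ∂μ)
      ≤ (A - a) ^ p * kappa p (((∫ ω, X ω ∂μ) - a) / (A - a)) := by
  set m := ∫ ω, X ω ∂μ with hm
  have hAa : (0:ℝ) < A - a := sub_pos.2 haA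
  -- m ∈ [a, A]
  have ham : a ≤ m := by
    have : ∫ _ω, a ∂μ ≤ ∫ ω, X ω ∂μ :=
      integral_mono_ae (integrable_const a) hXint (hX.mono fun ω hω => hω.1)
    simpa using this
  have hmA : m ≤ A := by
    have : ∫ ω, X ω ∂μ ≤ ∫ _ω, A ∂μ :=
      integral_mono_ae hXint (integrable_const A) (hX.mono fun ω hω => hω.2)
    simpa using this
  have hconv := convexOn_abs_rpow m a A p hp
  -- constants
  set c₁ : ℝ := ((A - m) ^ p - (m - a) ^ p) / (A - a) with hc₁
  set c₂ : ℝ := (A * (m - a) ^ p - a * (A - m) ^ p) / (A - a) with hc₂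
  -- pointwise bound
  have hbound : ∀ᵐ ω ∂μ, |X ω - m| ^ p ≤ c₁ * X ω + c₂ := by
    refine hX.mono fun ω hω => ?_
    have hsa : (0:ℝ) ≤ (A - X ω) / (A - a) := div_nonneg (by linarith [hω.2]) hAa.le
    have hsb : (0:ℝ) ≤ (X ω - a) / (A - a) := div_nonneg (by linarith [hω.1]) hAa.le
    have hsum : (A - X ω) / (A - a) + (X ω - a) / (A - a) = 1 := by
      field_simp; ring
    have hcomb : ((A - X ω) / (A - a)) • a + ((X ω - a) / (A - a)) • A = X ω := by
      simp only [smul_eq_mul]; field_simp; ring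
    have := hconv.2 (Set.left_mem_Icc.2 haA.le) (Set.right_mem_Icc.2 haA.le) hsa hsb hsum
    rw [hcomb] at this
    have hma : |a - m| = m - a := by rw [abs_sub_comm]; exact abs_of_nonneg (by linarith)
    have hAm : |A - m| = A - m := abs_of_nonneg (by linarith)
    simp only [smul_eq_mul, hma, hAm] at this
    calc |X ω - m| ^ p
        ≤ (A - X ω) / (A - a) * (m - a) ^ p + (X ω - a) / (A - a) * (A - m) ^ p := this
      _ = c₁ * X ω + c₂ := by rw [hc₁, hc₂]; field_simp; ring
  -- integrability of the bound
  have hint : Integrable (fun ω => c₁ * X ω + c₂) μ := (hXint.const_mul c₁).add (integrable_const c₂)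
  have hle : (∫ ω, |X ω - m| ^ p ∂μ) ≤ ∫ ω, (c₁ * X ω + c₂) ∂μ :=
    integral_mono_ae hmom hint hbound
  have hint_eq : ∫ ω, (c₁ * X ω + c₂) ∂μ = c₁ * m + c₂ := by
    rw [integral_add (hXint.const_mul c₁) (integrable_const c₂), integral_const_mul,
      integral_const]
    simp [hm]
  -- the RHS equals c₁ * m + c₂
  have hrhs : (A - a) ^ p * kappa p ((m - a) / (A - a)) = c₁ * m + c₂ := by
    have h1x : 1 - (m - a) / (A - a) = (A - m) / (A - a) := by
      field_simp; ring
    rw [kappa, h1x, Real.div_rpow (by linarith) hAa.le, Real.div_rpow (by linarith) hAa.le,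
      hc₁, hc₂]
    have hAap : (0:ℝ) < (A - a) ^ p := Real.rpow_pos_of_pos hAa p
    field_simp
    ring
  exact (hle.trans_eq hint_eq).trans_eq hrhs.symm
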